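/- Fix σ ∈ {−1,+1}, a function f : (0,∞) → ℝ, and constants η, μ > 0. Let r₁, r₂, x₁, y₁, z₁, x₂, y₂, z₂ : [0,∞) → ℝ³ be a differentiable solution of the two-vehicle system ṙ_j = x_j, ẋ_j = y_j u_j + z_j v_j, ẏ_j = −x_j u_j, ż_j = −x_j v_j (j = 1,2), with (x_j, y_j, z_j) orthonormal frames, where (writing r = r₂ − r₁, w = r/|r|) u₁ = σ η (w·x₁)(w·y₁) + μ (x₂·y₁) + f(|r|)(w·y₁) and v₁ = σ η (w·x₁)(w·z₁) + μ (x₂·z₁) + f(|r|)(w·z₁). Suppose at time t₀ that r(t₀) ≠ 0 and x₂(t₀) = x₁(t₀). Then the derivative of t ↦ r(t)·x₁(t) at t₀ equals |r| [ 1 − (w·x₁)² ] [ σ η (w·x₁) + f(|r|) ], evaluated at t₀. -/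

import Mathlib

open RealInnerProductSpace

/-- An orthonormal frame in ℝ³: an ordered triple of pairwise orthogonal unit vectors. -/
def IsONFrame (x y z : EuclideanSpace ℝ (Fin 3)) : Prop :=
  ‖x‖ = 1 ∧ ‖y‖ = 1 ∧ ‖z‖ = 1 ∧ ⟪x, y⟫ = 0 ∧ ⟪x, z⟫ = 0 ∧ ⟪y, z⟫ = 0

lemma parseval3 {x y z : EuclideanSpace ℝ (Fin 3)} (h : IsONFrame x y z)
    (w : EuclideanSpace ℝ (Fin 3)) :
    ⟪w, x⟫ ^ 2 + ⟪w, y⟫ ^ 2 + ⟪w, z⟫ ^ 2 = ‖w‖ ^ 2 := by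
  obtain ⟨hx, hy, hz, hxy, hxz, hyz⟩ := h
  set b : Fin 3 → EuclideanSpace ℝ (Fin 3) := ![x, y, z] with hb
  have hxx : ⟪x, x⟫ = 1 := by rw [real_inner_self_eq_norm_sq, hx]; norm_num
  have hyy : ⟪y, y⟫ = 1 := by rw [real_inner_self_eq_norm_sq, hy]; norm_num
  have hzz : ⟪z, z⟫ = 1 := by rw [real_inner_self_eq_norm_sq, hz]; norm_num
  have hyx : ⟪y, x⟫ = 0 := by rw [real_inner_comm]; exact hxy
  have hzx : ⟪z, x⟫ = 0 := by rw [real_inner_comm]; exact hxz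
  have hzy : ⟪z, y⟫ = 0 := by rw [real_inner_comm]; exact hyz
  have hon : Orthonormal ℝ b := by
    rw [orthonormal_iff_ite]
    intro i j
    fin_cases i <;> fin_cases j <;>
      simp only [b, Matrix.cons_val_zero, Matrix.cons_val_one, Matrix.head_cons,
        Matrix.cons_val_two, Matrix.tail_cons, Fin.mk_zero, Fin.mk_one, Fin.isValue] <;>
      norm_num [hx, hy, hz, hxx, hyy, hzz, hxy, hxz, hyz, hyx, hzx, hzy, Fin.ext_iff]
  have hcard : Fintype.card (Fin 3) = Module.finrank ℝ (EuclideanSpace ℝ (Fin 3)) := by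
    simp
  let B : Module.Basis (Fin 3) ℝ (EuclideanSpace ℝ (Fin 3)) :=
    basisOfLinearIndependentOfCardEqFinrank hon.linearIndependent hcard
  have hBcoe : ⇑B = b := coe_basisOfLinearIndependentOfCardEqFinrank _ _
  have honB : Orthonormal ℝ B := by rw [hBcoe]; exact hon
  let OB := B.toOrthonormalBasis honB
  have hOB : ⇑OB = b := by
    simp only [OB, Module.Basis.coe_toOrthonormalBasis, hBcoe]
  have key := OB.sum_inner_mul_inner w w
  rw [real_inner_self_eq_norm_sq] at key
  simp only [hOB] at key
  rw [Fin.sum_univ_three] at key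
  simp only [b, Matrix.cons_val_zero, Matrix.cons_val_one, Matrix.head_cons,
    Matrix.cons_val_two, Matrix.tail_cons] at key
  simp only [real_inner_comm w x, real_inner_comm w y, real_inner_comm w z] at key ⊢
  linear_combination key

theorem stmt15 (σ : ℝ) (hσ : σ = -1 ∨ σ = 1)
    (f : ℝ → ℝ) (η μ : ℝ) (hη : 0 < η) (hμ : 0 < μ)
    (r₁ r₂ x₁ y₁ z₁ x₂ y₂ z₂ : ℝ → EuclideanSpace ℝ (Fin 3))
    (u₁ v₁ u₂ v₂ : ℝ → ℝ)
    (frame1 : ∀ t ≥ (0 : ℝ), IsONFrame (x₁ t) (y₁ t) (z₁ t))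
    (frame2 : ∀ t ≥ (0 : ℝ), IsONFrame (x₂ t) (y₂ t) (z₂ t))
    (hr₁ : ∀ t ≥ (0 : ℝ), HasDerivAt r₁ (x₁ t) t)
    (hr₂ : ∀ t ≥ (0 : ℝ), HasDerivAt r₂ (x₂ t) t)
    (hx₁ : ∀ t ≥ (0 : ℝ), HasDerivAt x₁ (u₁ t • y₁ t + v₁ t • z₁ t) t)
    (hy₁ : ∀ t ≥ (0 : ℝ), HasDerivAt y₁ (-u₁ t • x₁ t) t)
    (hz₁ : ∀ t ≥ (0 : ℝ), HasDerivAt z₁ (-v₁ t • x₁ t) t)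
    (hx₂ : ∀ t ≥ (0 : ℝ), HasDerivAt x₂ (u₂ t • y₂ t + v₂ t • z₂ t) t)
    (hy₂ : ∀ t ≥ (0 : ℝ), HasDerivAt y₂ (-u₂ t • x₂ t) t)
    (hz₂ : ∀ t ≥ (0 : ℝ), HasDerivAt z₂ (-v₂ t • x₂ t) t)
    (hu₁ : ∀ t ≥ (0 : ℝ),
      u₁ t = σ * η * ⟪‖r₂ t - r₁ t‖⁻¹ • (r₂ t - r₁ t), x₁ t⟫ *
               ⟪‖r₂ t - r₁ t‖⁻¹ • (r₂ t - r₁ t), y₁ t⟫ +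
             μ * ⟪x₂ t, y₁ t⟫ +
             f ‖r₂ t - r₁ t‖ * ⟪‖r₂ t - r₁ t‖⁻¹ • (r₂ t - r₁ t), y₁ t⟫)
    (hv₁ : ∀ t ≥ (0 : ℝ),
      v₁ t = σ * η * ⟪‖r₂ t - r₁ t‖⁻¹ • (r₂ t - r₁ t), x₁ t⟫ *
               ⟪‖r₂ t - r₁ t‖⁻¹ • (r₂ t - r₁ t), z₁ t⟫ +
             μ * ⟪x₂ t, z₁ t⟫ +
             f ‖r₂ t - r₁ t‖ * ⟪‖r₂ t - r₁ t‖⁻¹ • (r₂ t - r₁ t), z₁ t⟫)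
    (t₀ : ℝ) (ht₀ : t₀ ≥ 0)
    (hrt₀ : r₂ t₀ - r₁ t₀ ≠ 0) (hxt₀ : x₂ t₀ = x₁ t₀) :
    HasDerivAt (fun t => ⟪r₂ t - r₁ t, x₁ t⟫)
      (‖r₂ t₀ - r₁ t₀‖ *
        (1 - ⟪‖r₂ t₀ - r₁ t₀‖⁻¹ • (r₂ t₀ - r₁ t₀), x₁ t₀⟫ ^ 2) *
        (σ * η * ⟪‖r₂ t₀ - r₁ t₀‖⁻¹ • (r₂ t₀ - r₁ t₀), x₁ t₀⟫ + f ‖r₂ t₀ - r₁ t₀‖))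
      t₀ := by
  have hr : HasDerivAt (fun t => r₂ t - r₁ t) (x₂ t₀ - x₁ t₀) t₀ :=
    (hr₂ t₀ ht₀).sub (hr₁ t₀ ht₀)
  have hD := (HasDerivAt.inner ℝ hr (hx₁ t₀ ht₀))
  refine hD.congr_deriv (Eq.symm ?_)
  set r := r₂ t₀ - r₁ t₀
  set n := ‖r‖ with hn
  have hn0 : n ≠ 0 := by simp [hn, hrt₀]
  obtain ⟨hx1, hy1, hz1, hxy, hxz, hyz⟩ := frame1 t₀ ht₀
  have hsmul : ∀ v : EuclideanSpace ℝ (Fin 3), ⟪n⁻¹ • r, v⟫ = n⁻¹ * ⟪r, v⟫ := fun v =>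
    real_inner_smul_left r v n⁻¹
  have hu : u₁ t₀ = σ * η * (n⁻¹ * ⟪r, x₁ t₀⟫) * (n⁻¹ * ⟪r, y₁ t₀⟫) +
      f n * (n⁻¹ * ⟪r, y₁ t₀⟫) := by
    rw [hu₁ t₀ ht₀, hsmul, hsmul, hxt₀, hxy]; ring
  have hv : v₁ t₀ = σ * η * (n⁻¹ * ⟪r, x₁ t₀⟫) * (n⁻¹ * ⟪r, z₁ t₀⟫) +
      f n * (n⁻¹ * ⟪r, z₁ t₀⟫) := by
    rw [hv₁ t₀ ht₀, hsmul, hsmul, hxt₀, hxz]; ring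
  rw [inner_add_right, real_inner_smul_right, real_inner_smul_right, hsmul, hxt₀, sub_self,
    inner_zero_left, add_zero, hu, hv]
  set A := (⟪r, x₁ t₀⟫ : ℝ) with hA
  set B := (⟪r, y₁ t₀⟫ : ℝ) with hB
  set C := (⟪r, z₁ t₀⟫ : ℝ) with hC
  have hpars : A ^ 2 + B ^ 2 + C ^ 2 = n ^ 2 :=
    parseval3 ⟨hx1, hy1, hz1, hxy, hxz, hyz⟩ r
  have hBC : B ^ 2 + C ^ 2 = n ^ 2 - A ^ 2 := by linarith
  clear_value A B C
  field_simp
  linear_combination (-(n * f n) - A * σ * η) * hBC
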